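/- Let A be a Schur ring over a group G with A-subgroups V, W such that A is the star product A = A_V ★ A_W (conditions: V∩W ⊴ W; every basic set inside W∖V is a union of (V∩W)-cosets; every basic set outside V∪W equals YZ for basic sets Y ⊆ V, Z ⊆ W). If moreover V ∩ W ⊴ G, then A is the V/(V∩W)-wreath product, i.e., every basic set X of A with X ⊆ G∖V satisfies (V∩W) ≤ rad(X). -/

import Mathlib

open scoped Pointwise

noncomputable def clsum {G : Type*} [Group G] [Fintype G] (s : Set G) :
    MonoidAlgebra ℤ G :=
  ∑ x ∈ s.toFinite.toFinset, MonoidAlgebra.of ℤ G x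

structure SchurRing (G : Type*) [Group G] [Fintype G] where
  P : Set (Set G)
  one_mem : ({(1 : G)} : Set G) ∈ P
  nonempty_cls : ∀ X ∈ P, X.Nonempty
  cover : ∀ g : G, ∃ X ∈ P, g ∈ X
  disj : ∀ X ∈ P, ∀ Y ∈ P, X ≠ Y → Disjoint X Y
  inv_mem : ∀ X ∈ P, X⁻¹ ∈ P
  mul_closed : ∀ X ∈ P, ∀ Y ∈ P,
    clsum X * clsum Y ∈ Submodule.span ℤ (clsum '' P)

def SchurRing.isASet {G : Type*} [Group G] [Fintype G] (A : SchurRing G) (X : Set G) : Prop :=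
  clsum X ∈ Submodule.span ℤ (clsum '' A.P)

lemma clsum_apply {G : Type*} [Group G] [Fintype G] (s : Set G) (g : G)
    [Decidable (g ∈ s)] : (clsum s).coeff g = if g ∈ s then 1 else 0 := by
  classical
  unfold clsum
  rw [MonoidAlgebra.coeff_sum, Finset.sum_apply']
  simp only [MonoidAlgebra.of_apply, MonoidAlgebra.coeff_single, Finsupp.single_apply]
  rw [Finset.sum_ite_eq' s.toFinite.toFinset g (fun _ => (1:ℤ))]
  simp

lemma span_const {G : Type*} [Group G] [Fintype G] (A : SchurRing G)
    (f : MonoidAlgebra ℤ G) (hf : f ∈ Submodule.span ℤ (clsum '' A.P))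
    (X : Set G) (hX : X ∈ A.P) {x y : G} (hx : x ∈ X) (hy : y ∈ X) :
    f.coeff x = f.coeff y := by
  classical
  induction hf using Submodule.span_induction with
  | mem v hv =>
    obtain ⟨X', hX', rfl⟩ := hv
    rw [clsum_apply, clsum_apply]
    by_cases hXX : X' = X
    · subst hXX; simp [hx, hy]
    · have hd := A.disj X' hX' X hX hXX
      have hx' : x ∉ X' := fun h => (Set.disjoint_left.mp hd h) hx
      have hy' : y ∉ X' := fun h => (Set.disjoint_left.mp hd h) hy
      simp [hx', hy']
  | zero => simp
  | add u v _ _ hu hv =>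
    rw [MonoidAlgebra.coeff_add, Finsupp.add_apply, Finsupp.add_apply, hu, hv]
  | smul a u _ hu =>
    rw [MonoidAlgebra.coeff_smul_apply, MonoidAlgebra.coeff_smul_apply, hu]

lemma aset_subset {G : Type*} [Group G] [Fintype G] (A : SchurRing G)
    (S : Set G) (hS : A.isASet S) (X : Set G) (hX : X ∈ A.P)
    {x : G} (hx : x ∈ X) (hxS : x ∈ S) : X ⊆ S := by
  classical
  intro y hy
  have := span_const A (clsum S) hS X hX hx hy
  rw [clsum_apply, clsum_apply] at this
  by_contra hyS
  simp [hxS, hyS] at this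

lemma stable_image {G : Type*} [Group G] (X : Set G) (g : G)
    (h1 : ∀ x ∈ X, g * x ∈ X) (h2 : ∀ x ∈ X, g⁻¹ * x ∈ X) :
    (fun x => g * x) '' X = X := by
  apply Set.Subset.antisymm
  · rintro _ ⟨x, hx, rfl⟩; exact h1 x hx
  · intro x hx
    exact ⟨g⁻¹ * x, h2 x hx, by group⟩

lemma stable_image_r {G : Type*} [Group G] (X : Set G) (g : G)
    (h1 : ∀ x ∈ X, x * g ∈ X) (h2 : ∀ x ∈ X, x * g⁻¹ ∈ X) :
    (fun x => x * g) '' X = X := by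
  apply Set.Subset.antisymm
  · rintro _ ⟨x, hx, rfl⟩; exact h1 x hx
  · intro x hx
    exact ⟨x * g⁻¹, h2 x hx, by group⟩

/-- a star product with V ∩ W normal in G is the V/(V∩W)-wreath product. -/
theorem stmt9 {G : Type*} [Group G] [Fintype G] (A : SchurRing G) (V W : Subgroup G)
    (hV : A.isASet (V : Set G)) (hW : A.isASet (W : Set G))
    (hnormW : ∀ w ∈ W, ∀ x ∈ (V ⊓ W : Subgroup G), w * x * w⁻¹ ∈ (V ⊓ W : Subgroup G))
    (hstar2 : ∀ X ∈ A.P, X ⊆ (W : Set G) \ (V : Set G) →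
      ∀ x ∈ X, ∀ c ∈ (V ⊓ W : Subgroup G), c * x ∈ X)
    (hstar3 : ∀ X ∈ A.P, X ⊆ ((V : Set G) ∪ (W : Set G))ᶜ →
      ∃ Y ∈ A.P, ∃ Z ∈ A.P, Y ⊆ (V : Set G) ∧ Z ⊆ (W : Set G) ∧ X = Y * Z)
    (hnormG : (V ⊓ W : Subgroup G).Normal) :
    ∀ X ∈ A.P, X ⊆ (V : Set G)ᶜ →
      ∀ g ∈ (V ⊓ W : Subgroup G),
        (fun x => x * g) '' X = X ∧ (fun x => g * x) '' X = X := by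
  intro X hX hXV
  -- key step: for every g ∈ V ⊓ W and x ∈ X, both g*x and x*g stay in X
  suffices key : ∀ g ∈ (V ⊓ W : Subgroup G), ∀ x ∈ X, g * x ∈ X ∧ x * g ∈ X by
    intro g hg
    have hginv : g⁻¹ ∈ (V ⊓ W : Subgroup G) := inv_mem hg
    constructor
    · exact stable_image_r X g (fun x hx => (key g hg x hx).2)
        (fun x hx => (key g⁻¹ hginv x hx).2)
    · exact stable_image X g (fun x hx => (key g hg x hx).1)
        (fun x hx => (key g⁻¹ hginv x hx).1)
  intro g hg x hx
  by_cases hXW : ∃ w ∈ X, w ∈ (W : Set G)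
  · -- X ⊆ W, hence X ⊆ W \ V
    obtain ⟨w, hwX, hwW⟩ := hXW
    have hsub : X ⊆ (W : Set G) := aset_subset A _ hW X hX hwX hwW
    have hsub' : X ⊆ (W : Set G) \ (V : Set G) := fun y hy => ⟨hsub hy, hXV hy⟩
    refine ⟨hstar2 X hX hsub' x hx g hg, ?_⟩
    have hc : x * g * x⁻¹ ∈ (V ⊓ W : Subgroup G) := hnormW x (hsub' hx).1 g hg
    have := hstar2 X hX hsub' x hx _ hc
    simpa [mul_assoc] using this
  · -- X is disjoint from V ∪ W
    push_neg at hXW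
    have hdis : X ⊆ ((V : Set G) ∪ (W : Set G))ᶜ := by
      intro y hy
      rintro (h | h)
      · exact hXV hy h
      · exact hXW y hy h
    obtain ⟨Y, hY, Z, hZ, hYV, hZW, hXYZ⟩ := hstar3 X hX hdis
    -- Z ⊆ W \ V
    have hZV : Z ⊆ (W : Set G) \ (V : Set G) := by
      intro z hz
      refine ⟨hZW hz, fun hzV => ?_⟩
      have hZsub : Z ⊆ (V : Set G) := aset_subset A _ hV Z hZ hz hzV
      have : X ⊆ (V : Set G) := by
        rw [hXYZ]
        rintro _ ⟨y, hy, z', hz', rfl⟩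
        exact mul_mem (hYV hy) (hZsub hz')
      obtain ⟨x0, hx0⟩ := A.nonempty_cls X hX
      exact hXV hx0 (this hx0)
    rw [hXYZ] at hx ⊢
    obtain ⟨y, hy, z, hz, rfl⟩ := hx
    constructor
    · -- g * (y * z) = y * ((y⁻¹ * g * y) * z)
      have hc : y⁻¹ * g * y ∈ (V ⊓ W : Subgroup G) := by
        have := hnormG.conj_mem g hg y⁻¹
        simpa using this
      have hz' : (y⁻¹ * g * y) * z ∈ Z := hstar2 Z hZ hZV z hz _ hc
      refine ⟨y, hy, _, hz', ?_⟩
      group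
    · -- (y * z) * g = y * ((z * g * z⁻¹) * z)
      have hc : z * g * z⁻¹ ∈ (V ⊓ W : Subgroup G) := hnormW z (hZW hz) g hg
      have hz' : (z * g * z⁻¹) * z ∈ Z := hstar2 Z hZ hZV z hz _ hc
      refine ⟨y, hy, _, hz', ?_⟩
      group
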